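/- Let A be an n×n complex matrix and N Hermitian positive definite. If A is weighted normal with respect to N (i.e., A A^# = A^# A with A^# = N^{-1} A* N) and λ ≠ 0, then λ is an eigenvalue of A if and only if 1/λ is an eigenvalue of the weighted Moore-Penrose inverse A†_{N,N}. -/

import Mathlib

open Matrix Filter Topology
open scoped ComplexOrder

/-- The four equations characterizing the weighted Moore-Penrose inverse of `A`
with respect to the weights `(M, N)`. -/
def IsWMP {m n : ℕ} (M : Matrix (Fin m) (Fin m) ℂ) (N : Matrix (Fin n) (Fin n) ℂ)
    (A : Matrix (Fin m) (Fin n) ℂ) (X : Matrix (Fin n) (Fin m) ℂ) : Prop :=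
  A * X * A = A ∧ X * A * X = X ∧ (M * A * X)ᴴ = M * A * X ∧ (N * X * A)ᴴ = N * X * A

/-- if A is weighted normal w.r.t. N and λ ≠ 0, then λ is an eigenvalue
of A iff 1/λ is an eigenvalue of A†_{N,N}. -/
theorem stmt_9 {n : ℕ} (A N : Matrix (Fin n) (Fin n) ℂ) (hN : N.PosDef)
    (hnormal : A * (N⁻¹ * Aᴴ * N) = (N⁻¹ * Aᴴ * N) * A)
    (X : Matrix (Fin n) (Fin n) ℂ) (hX : IsWMP N N A X)
    (lam : ℂ) (hlam : lam ≠ 0) :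
    (∃ x : Fin n → ℂ, x ≠ 0 ∧ A.mulVec x = lam • x) ↔
      (∃ x : Fin n → ℂ, x ≠ 0 ∧ X.mulVec x = lam⁻¹ • x) := by
  obtain ⟨h1, h2, h3, h4⟩ := hX
  set As : Matrix (Fin n) (Fin n) ℂ := N⁻¹ * Aᴴ * N with hAsdef
  have hH : Nᴴ = N := hN.1
  have hdet : IsUnit N.det := hN.det_pos.ne'.isUnit
  have hNN : N⁻¹ * N = 1 := nonsing_inv_mul N hdet
  have hNN' : N * N⁻¹ = 1 := mul_nonsing_inv N hdet
  have hHinv : (N⁻¹)ᴴ = N⁻¹ := by rw [conjTranspose_nonsing_inv, hH]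
  -- inner product manipulation lemma
  have ipl : ∀ (M : Matrix (Fin n) (Fin n) ℂ) (u v : Fin n → ℂ),
      star (M *ᵥ u) ⬝ᵥ N *ᵥ v = star u ⬝ᵥ (Mᴴ * N) *ᵥ v := by
    intro M u v
    simp only [star_mulVec, dotProduct_mulVec, vecMul_vecMul]
  -- positive definiteness: vanishing norm implies zero
  have hzero : ∀ y : Fin n → ℂ, star y ⬝ᵥ N *ᵥ y = 0 → y = 0 := by
    intro y h
    by_contra hy
    exact absurd h (hN.dotProduct_mulVec_pos hy).ne'
  -- adjoint relations
  have hAsHN : Asᴴ * N = N * A := by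
    rw [hAsdef]
    simp only [conjTranspose_mul, hH, hHinv, conjTranspose_conjTranspose]
    rw [mul_assoc, mul_assoc, hNN, mul_one]
  have hNAs : N * As = Aᴴ * N := by
    rw [hAsdef, ← mul_assoc, ← mul_assoc, hNN', one_mul]
  have adjL : ∀ u v : Fin n → ℂ,
      star (As *ᵥ u) ⬝ᵥ N *ᵥ v = star u ⬝ᵥ N *ᵥ (A *ᵥ v) := by
    intro u v
    rw [ipl, hAsHN, ← mulVec_mulVec]
  have adjR : ∀ u v : Fin n → ℂ,
      star u ⬝ᵥ N *ᵥ (As *ᵥ v) = star (A *ᵥ u) ⬝ᵥ N *ᵥ v := by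
    intro u v
    rw [ipl, mulVec_mulVec, hNAs]
  -- N-self-adjointness from the WMP conditions
  have sa : ∀ P : Matrix (Fin n) (Fin n) ℂ, (N * P)ᴴ = N * P →
      ∀ u v : Fin n → ℂ, star (P *ᵥ u) ⬝ᵥ N *ᵥ v = star u ⬝ᵥ N *ᵥ (P *ᵥ v) := by
    intro P hP u v
    rw [ipl, mulVec_mulVec,
      show Pᴴ * N = N * P by rw [show Pᴴ * N = (N * P)ᴴ by rw [conjTranspose_mul, hH], hP]]
  have saAX := sa (A * X) (by rw [← mul_assoc]; exact h3)
  have saXA := sa (X * A) (by rw [← mul_assoc]; exact h4)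
  -- normality: kernels of A and As agree
  have kerAs : ∀ z : Fin n → ℂ, A *ᵥ z = 0 → As *ᵥ z = 0 := by
    intro z hz
    apply hzero
    rw [adjL, show A *ᵥ (As *ᵥ z) = 0 by
      rw [mulVec_mulVec, hnormal, ← mulVec_mulVec, hz, mulVec_zero]]
    simp
  have kerA : ∀ z : Fin n → ℂ, As *ᵥ z = 0 → A *ᵥ z = 0 := by
    intro z hz
    apply hzero
    rw [← adjR, show As *ᵥ (A *ᵥ z) = 0 by
      rw [mulVec_mulVec, ← hnormal, ← mulVec_mulVec, hz, mulVec_zero]]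
    simp
  constructor
  · rintro ⟨x, hx, hAx⟩
    set y : Fin n → ℂ := x - (X * A) *ᵥ x with hy
    have hAy : A *ᵥ y = 0 := by
      rw [hy, mulVec_sub, mulVec_mulVec, ← mul_assoc, h1, sub_self]
    have hXAy : (X * A) *ᵥ y = 0 := by
      rw [← mulVec_mulVec, hAy, mulVec_zero]
    have hAsy : As *ᵥ y = 0 := kerAs y hAy
    have e1 : star y ⬝ᵥ N *ᵥ ((X * A) *ᵥ x) = 0 := by
      rw [← saXA, hXAy]
      simp
    have e2 : star y ⬝ᵥ N *ᵥ x = 0 := by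
      rw [show x = lam⁻¹ • (A *ᵥ x) by rw [hAx, smul_smul, inv_mul_cancel₀ hlam, one_smul],
        mulVec_smul, dotProduct_smul, ← adjL, hAsy]
      simp
    have hy0 : y = 0 := by
      apply hzero
      have expand : N *ᵥ y = N *ᵥ x - N *ᵥ ((X * A) *ᵥ x) := by rw [hy, mulVec_sub]
      rw [expand, dotProduct_sub, e1, e2, sub_zero]
    have h5 : (X * A) *ᵥ x = x := by
      have : x - (X * A) *ᵥ x = 0 := by rw [← hy]; exact hy0
      exact (sub_eq_zero.mp this).symm
    have hlx : lam • (X *ᵥ x) = x := by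
      calc lam • (X *ᵥ x) = X *ᵥ (lam • x) := (mulVec_smul X lam x).symm
        _ = X *ᵥ (A *ᵥ x) := by rw [hAx]
        _ = (X * A) *ᵥ x := mulVec_mulVec x X A
        _ = x := h5
    refine ⟨x, hx, ?_⟩
    calc X *ᵥ x = lam⁻¹ • (lam • (X *ᵥ x)) := by
          rw [smul_smul, inv_mul_cancel₀ hlam, one_smul]
      _ = lam⁻¹ • x := by rw [hlx]
  · rintro ⟨x, hx, hXx⟩
    have hlam' : (lam⁻¹ : ℂ) ≠ 0 := inv_ne_zero hlam
    set z : Fin n → ℂ := x - (A * X) *ᵥ x with hz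
    have hXz : X *ᵥ z = 0 := by
      rw [hz, mulVec_sub, mulVec_mulVec, ← mul_assoc, h2, sub_self]
    have hAXz : (A * X) *ᵥ z = 0 := by
      rw [← mulVec_mulVec, hXz, mulVec_zero]
    have hXAx : (X * A) *ᵥ x = x := by
      have e : lam⁻¹ • ((X * A) *ᵥ x) = lam⁻¹ • x := by
        calc lam⁻¹ • ((X * A) *ᵥ x) = (X * A) *ᵥ (lam⁻¹ • x) := (mulVec_smul _ _ _).symm
          _ = (X * A) *ᵥ (X *ᵥ x) := by rw [hXx]
          _ = (X * A * X) *ᵥ x := mulVec_mulVec x (X * A) X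
          _ = X *ᵥ x := by rw [h2]
          _ = lam⁻¹ • x := hXx
      exact smul_right_injective (Fin n → ℂ) hlam' e
    have hAsz : As *ᵥ z = 0 := by
      apply hzero
      have hAA : A *ᵥ (As *ᵥ z) = (A * X) *ᵥ (A *ᵥ (As *ᵥ z)) := by
        simp only [mulVec_mulVec]
        rw [show A * X * (A * As) = A * As by rw [← mul_assoc, h1]]
      rw [adjL, hAA, ← saAX, hAXz]
      simp
    have hAz : A *ᵥ z = 0 := kerA z hAsz
    have hXAz : (X * A) *ᵥ z = 0 := by
      rw [← mulVec_mulVec, hAz, mulVec_zero]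
    have e1 : star z ⬝ᵥ N *ᵥ ((A * X) *ᵥ x) = 0 := by
      rw [← saAX, hAXz]
      simp
    have e2 : star z ⬝ᵥ N *ᵥ x = 0 := by
      rw [← hXAx, ← saXA, hXAz]
      simp
    have hz0 : z = 0 := by
      apply hzero
      have expand : N *ᵥ z = N *ᵥ x - N *ᵥ ((A * X) *ᵥ x) := by rw [hz, mulVec_sub]
      rw [expand, dotProduct_sub, e1, e2, sub_zero]
    have h6 : (A * X) *ᵥ x = x := by
      have : x - (A * X) *ᵥ x = 0 := by rw [← hz]; exact hz0
      exact (sub_eq_zero.mp this).symm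
    have hlx : lam⁻¹ • (A *ᵥ x) = x := by
      calc lam⁻¹ • (A *ᵥ x) = A *ᵥ (lam⁻¹ • x) := (mulVec_smul A _ x).symm
        _ = A *ᵥ (X *ᵥ x) := by rw [hXx]
        _ = (A * X) *ᵥ x := mulVec_mulVec x A X
        _ = x := h6
    refine ⟨x, hx, ?_⟩
    calc A *ᵥ x = lam • (lam⁻¹ • (A *ᵥ x)) := by
          rw [smul_smul, mul_inv_cancel₀ hlam, one_smul]
      _ = lam • x := by rw [hlx]
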